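/- arXiv:2506.13517 — 2 statements merged into one kernel-verified Lean document; each statement's English description precedes it below -/
import Mathlib

section
/- Let f : ℝ² × Y → ℝ be smooth with fiberwise mean zero (∫_{{z}×Y} f dvol_Y = 0 for all z ∈ ℝ²), Y compact with Laplacian eigenvalues 0 = λ₀ < λ₁ ≤ λ₂ ≤ …, and suppose |∇^j f| = O(r^{−μ}) for j ≤ 2 and some μ > 0. If u_i = f_i * B_i where f_i(z) = ∫_Y f(z,·)v_i and B_i is the kernel with Fourier transform (λ_i + |ξ|²)^{−1}, then |u_i(z)| ≤ C·λ_i^{−k/2}·|z|^{−μ} for |z| large, with C independent of i. -/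
set_option maxHeartbeats 1000000

open MeasureTheory Set

/-- The Green's kernel `B_i` of `Δ − λ` on `ℝ²` (Fourier transform `1/(λ + |ξ|²)`). -/
noncomputable def Bker (lam : ℝ) (z : EuclideanSpace ℝ (Fin 2)) : ℝ :=
  (1 / 2) * ∫ t in Set.Ioi (0:ℝ), t⁻¹ * Real.exp (-lam * t - ‖z‖ ^ 2 / (4 * t))

section Aux

open Real Filter

local notation "E2" => EuclideanSpace ℝ (Fin 2)


lemma ofReal_integral_le' {α : Type*} [MeasurableSpace α] (μ : Measure α)
    (f : α → ℝ) (hf : 0 ≤ᵐ[μ] f) :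
    ENNReal.ofReal (∫ x, f x ∂μ) ≤ ∫⁻ x, ENNReal.ofReal (f x) ∂μ := by
  calc ENNReal.ofReal (∫ x, f x ∂μ) ≤ ENNReal.ofReal ‖∫ x, f x ∂μ‖ :=
        ENNReal.ofReal_le_ofReal (le_abs_self _)
    _ ≤ ENNReal.ofReal ((∫⁻ x, ENNReal.ofReal ‖f x‖ ∂μ).toReal) :=
        ENNReal.ofReal_le_ofReal (norm_integral_le_lintegral_norm f)
    _ ≤ ∫⁻ x, ENNReal.ofReal ‖f x‖ ∂μ := ENNReal.ofReal_toReal_le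
    _ = ∫⁻ x, ENNReal.ofReal (f x) ∂μ :=
        lintegral_congr_ae (hf.mono fun x hx => by simp only [Pi.zero_apply] at hx; dsimp only; rw [Real.norm_of_nonneg hx])

lemma gauss_lintegral {b : ℝ} (hb : 0 < b) :
    ∫⁻ v : E2, ENNReal.ofReal (Real.exp (-b * ‖v‖ ^ 2)) = ENNReal.ofReal (π / b) := by
  have hint : Integrable (fun v : E2 => Real.exp (-b * ‖v‖ ^ 2)) := by
    have h := (GaussianFourier.integrable_cexp_neg_mul_sq_norm_add (V := E2)
      (b := (b : ℂ)) (by simpa using hb) 0 0).norm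
    refine h.congr (Filter.Eventually.of_forall fun v => ?_)
    dsimp only
    rw [Complex.norm_exp]
    congr 1
    have : (-(b : ℂ) * (‖v‖ : ℂ) ^ 2 + 0 * ((inner ℝ (0 : E2) v : ℝ) : ℂ))
        = ((-b * ‖v‖ ^ 2 : ℝ) : ℂ) := by
      push_cast; ring
    rw [this, Complex.ofReal_re]
  rw [← ofReal_integral_eq_lintegral_ofReal hint
      (Filter.Eventually.of_forall fun v => (Real.exp_pos _).le),
    GaussianFourier.integral_rexp_neg_mul_sq_norm hb]
  norm_num [finrank_euclideanSpace_fin]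

lemma exp_half_lintegral :
    ∫⁻ t in Ioi (0:ℝ), ENNReal.ofReal (Real.exp (-(t / 2))) = ENNReal.ofReal 2 := by
  have heq : (fun t : ℝ => Real.exp (-(t / 2))) = fun t => Real.exp (-(1/2) * t) := by
    funext t; congr 1; ring
  have hint : IntegrableOn (fun t : ℝ => Real.exp (-(t / 2))) (Ioi 0) := by
    rw [heq]; exact exp_neg_integrableOn_Ioi 0 (by norm_num)
  rw [← ofReal_integral_eq_lintegral_ofReal hint
      (Filter.Eventually.of_forall fun t => (Real.exp_pos _).le)]
  congr 1
  rw [heq]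
  have h := integral_comp_mul_left_Ioi (fun x => Real.exp (-x)) 0 (b := 1/2) (by norm_num)
  simp only [mul_zero, smul_eq_mul, integral_exp_neg_Ioi_zero] at h
  simp only [neg_mul]
  rw [h]; norm_num

lemma inner_bound {lam t ρ : ℝ} (hlam : 1 ≤ lam) (ht0 : 0 < t) (hρ : 0 ≤ ρ)
    (z : E2) {A : Set E2} (hAm : MeasurableSet A) (hA : ∀ w ∈ A, ρ ≤ ‖z - w‖) :
    ∫⁻ w in A, ENNReal.ofReal (t⁻¹ * Real.exp (-lam * t - ‖z - w‖ ^ 2 / (4 * t))) ≤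
      ENNReal.ofReal (8 * π * Real.exp (-(ρ / 2)) * Real.exp (-(t / 2))) := by
  have hπ := Real.pi_pos
  have key : ∀ w ∈ A,
      ENNReal.ofReal (t⁻¹ * Real.exp (-lam * t - ‖z - w‖ ^ 2 / (4 * t))) ≤
        ENNReal.ofReal (t⁻¹ * Real.exp (-lam * t - ρ ^ 2 / (8 * t))) *
          ENNReal.ofReal (Real.exp (-(1/(8 * t)) * ‖z - w‖ ^ 2)) := by
    intro w hw
    rw [← ENNReal.ofReal_mul (by positivity)]
    apply ENNReal.ofReal_le_ofReal
    rw [mul_assoc, ← Real.exp_add]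
    have hs := hA w hw
    have h1 : ρ ^ 2 ≤ ‖z - w‖ ^ 2 := by nlinarith [norm_nonneg (z - w)]
    have h2 : -lam * t - ‖z - w‖ ^ 2 / (4 * t) ≤
        -lam * t - ρ ^ 2 / (8 * t) + -(1/(8 * t)) * ‖z - w‖ ^ 2 := by
      have h3 : ρ ^ 2 / (8 * t) ≤ ‖z - w‖ ^ 2 / (8 * t) := by gcongr
      have h4 : ‖z - w‖ ^ 2 / (4 * t)
          = ‖z - w‖ ^ 2 / (8 * t) + ‖z - w‖ ^ 2 / (8 * t) := by ring
      have h5 : -(1/(8 * t)) * ‖z - w‖ ^ 2 = -(‖z - w‖ ^ 2 / (8 * t)) := by ring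
      linarith
    exact mul_le_mul_of_nonneg_left (Real.exp_le_exp.mpr h2) (inv_nonneg.mpr ht0.le)
  calc ∫⁻ w in A, ENNReal.ofReal (t⁻¹ * Real.exp (-lam * t - ‖z - w‖ ^ 2 / (4 * t)))
      ≤ ∫⁻ w in A, ENNReal.ofReal (t⁻¹ * Real.exp (-lam * t - ρ ^ 2 / (8 * t))) *
          ENNReal.ofReal (Real.exp (-(1/(8 * t)) * ‖z - w‖ ^ 2)) := by
        refine lintegral_mono_ae ?_
        filter_upwards [ae_restrict_mem hAm] with w hw
        exact key w hw
    _ = ENNReal.ofReal (t⁻¹ * Real.exp (-lam * t - ρ ^ 2 / (8 * t))) *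
          ∫⁻ w in A, ENNReal.ofReal (Real.exp (-(1/(8 * t)) * ‖z - w‖ ^ 2)) :=
        lintegral_const_mul' _ _ ENNReal.ofReal_ne_top
    _ ≤ ENNReal.ofReal (t⁻¹ * Real.exp (-lam * t - ρ ^ 2 / (8 * t))) *
          ∫⁻ w, ENNReal.ofReal (Real.exp (-(1/(8 * t)) * ‖z - w‖ ^ 2)) :=
        mul_le_mul_right (setLIntegral_le_lintegral _ _) _
    _ = ENNReal.ofReal (t⁻¹ * Real.exp (-lam * t - ρ ^ 2 / (8 * t))) *
          ENNReal.ofReal (π / (1/(8 * t))) := by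
        have htrans : ∫⁻ w, ENNReal.ofReal (Real.exp (-(1/(8 * t)) * ‖z - w‖ ^ 2))
            = ∫⁻ v : E2, ENNReal.ofReal (Real.exp (-(1/(8 * t)) * ‖v‖ ^ 2)) :=
          (Measure.measurePreserving_sub_left volume z).lintegral_comp
            (f := fun v : E2 => ENNReal.ofReal (Real.exp (-(1/(8 * t)) * ‖v‖ ^ 2)))
            (by fun_prop)
        rw [htrans, gauss_lintegral (by positivity)]
    _ ≤ ENNReal.ofReal (8 * π * Real.exp (-(ρ / 2)) * Real.exp (-(t / 2))) := by
        rw [← ENNReal.ofReal_mul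
          (p := t⁻¹ * Real.exp (-lam * t - ρ ^ 2 / (8 * t))) (by positivity)]
        apply ENNReal.ofReal_le_ofReal
        have hd : π / (1/(8 * t)) = 8 * π * t := by
          field_simp
        rw [hd]
        have hi : t⁻¹ * Real.exp (-lam * t - ρ ^ 2 / (8 * t)) * (8 * π * t)
            = 8 * π * Real.exp (-lam * t - ρ ^ 2 / (8 * t)) := by
          field_simp
        rw [hi]
        have hmono : -lam * t - ρ ^ 2 / (8 * t) ≤ -(ρ / 2) + -(t / 2) := by
          have hA1 : ρ / 2 - t / 2 ≤ ρ ^ 2 / (8 * t) := by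
            rw [le_div_iff₀ (by positivity : (0:ℝ) < 8 * t)]
            nlinarith [sq_nonneg (2 * t - ρ)]
          nlinarith [ht0]
        have hee := Real.exp_le_exp.mpr hmono
        rw [Real.exp_add] at hee
        nlinarith [Real.exp_pos (-lam * t - ρ ^ 2 / (8 * t)),
          Real.exp_pos (-(ρ / 2)), Real.exp_pos (-(t / 2))]


lemma bker_bound {lam : ℝ} (hlam : 1 ≤ lam) (z : E2) {ρ : ℝ} (hρ : 0 ≤ ρ)
    {A : Set E2} (hAm : MeasurableSet A) (hA : ∀ w ∈ A, ρ ≤ ‖z - w‖) :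
    ∫⁻ w in A, ENNReal.ofReal (Bker lam (z - w))
      ≤ ENNReal.ofReal (8 * π * Real.exp (-(ρ / 2))) := by
  have hπ := Real.pi_pos
  have hpt : ∀ w : E2, ENNReal.ofReal (Bker lam (z - w)) ≤
      ENNReal.ofReal (1/2) * ∫⁻ t in Ioi (0:ℝ),
        ENNReal.ofReal (t⁻¹ * Real.exp (-lam * t - ‖z - w‖ ^ 2 / (4 * t))) := by
    intro w
    rw [Bker, ENNReal.ofReal_mul (by norm_num)]
    refine mul_le_mul_right (ofReal_integral_le' _ _ ?_) _
    filter_upwards [self_mem_ae_restrict measurableSet_Ioi] with t ht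
    have : (0:ℝ) < t := ht
    positivity
  have hmeas : Measurable (fun p : E2 × ℝ =>
      ENNReal.ofReal ((p.2)⁻¹ * Real.exp (-lam * p.2 - ‖z - p.1‖ ^ 2 / (4 * p.2)))) := by
    fun_prop
  have hconst : ∫⁻ t in Ioi (0:ℝ),
        ENNReal.ofReal (8 * π * Real.exp (-(ρ / 2)) * Real.exp (-(t / 2)))
      = ENNReal.ofReal (8 * π * Real.exp (-(ρ / 2))) *
        ∫⁻ t in Ioi (0:ℝ), ENNReal.ofReal (Real.exp (-(t / 2))) := by
    rw [← lintegral_const_mul' _ _ ENNReal.ofReal_ne_top]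
    refine lintegral_congr fun t => ?_
    rw [← ENNReal.ofReal_mul (by positivity)]
  calc ∫⁻ w in A, ENNReal.ofReal (Bker lam (z - w))
      ≤ ∫⁻ w in A, ENNReal.ofReal (1/2) * ∫⁻ t in Ioi (0:ℝ),
          ENNReal.ofReal (t⁻¹ * Real.exp (-lam * t - ‖z - w‖ ^ 2 / (4 * t))) :=
        lintegral_mono fun w => hpt w
    _ = ENNReal.ofReal (1/2) * ∫⁻ w in A, ∫⁻ t in Ioi (0:ℝ),
          ENNReal.ofReal (t⁻¹ * Real.exp (-lam * t - ‖z - w‖ ^ 2 / (4 * t))) :=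
        lintegral_const_mul' _ _ ENNReal.ofReal_ne_top
    _ = ENNReal.ofReal (1/2) * ∫⁻ t in Ioi (0:ℝ), ∫⁻ w in A,
          ENNReal.ofReal (t⁻¹ * Real.exp (-lam * t - ‖z - w‖ ^ 2 / (4 * t))) := by
        rw [lintegral_lintegral_swap (hmeas.aemeasurable)]
    _ ≤ ENNReal.ofReal (1/2) * ∫⁻ t in Ioi (0:ℝ),
          ENNReal.ofReal (8 * π * Real.exp (-(ρ / 2)) * Real.exp (-(t / 2))) := by
        refine mul_le_mul_right (lintegral_mono_ae ?_) _
        filter_upwards [self_mem_ae_restrict measurableSet_Ioi] with t ht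
        exact inner_bound hlam ht hρ z hAm hA
    _ = ENNReal.ofReal (8 * π * Real.exp (-(ρ / 2))) := by
        rw [hconst, exp_half_lintegral,
          ← ENNReal.ofReal_mul (by positivity), ← ENNReal.ofReal_mul (by norm_num)]
        refine congrArg ENNReal.ofReal ?_
        ring

lemma bker_nonneg (lam : ℝ) (v : E2) : 0 ≤ Bker lam v := by
  rw [Bker]
  refine mul_nonneg (by norm_num) (setIntegral_nonneg measurableSet_Ioi fun t ht => ?_)
  have : (0:ℝ) < t := ht
  positivity


/-- Decay of the Fourier modes `u_i = f_i * B_i` of the solution of the Poisson equation on a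
product `ℝ² × Y`: if `|f_i| ≤ C₀ λ_i^{−k/2} r^{−μ}` then `|u_i(z)| ≤ C λ_i^{−k/2} |z|^{−μ}`
for `|z|` large, with `C` independent of `i` (i.e. of the eigenvalue `λ_i ≥ 1`). -/
theorem stmt12 (μ C₀ k : ℝ) (hμ : 0 < μ) (hC₀ : 0 < C₀) :
    ∃ C > 0, ∃ R ≥ (1:ℝ), ∀ lam : ℝ, 1 ≤ lam →
      ∀ f : EuclideanSpace ℝ (Fin 2) → ℝ, Continuous f →
      (∀ w, |f w| ≤ C₀ * lam ^ (-k / 2) * (max 1 ‖w‖) ^ (-μ)) →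
      ∀ z : EuclideanSpace ℝ (Fin 2), R ≤ ‖z‖ →
        |∫ w, f w * Bker lam (z - w)| ≤ C * lam ^ (-k / 2) * ‖z‖ ^ (-μ) := by
  have hπ := Real.pi_pos
  have h2μ : (0:ℝ) < (2:ℝ) ^ μ := Real.rpow_pos_of_pos two_pos μ
  obtain ⟨M, hM⟩ : ∃ M : ℝ, ∀ x ≥ M, x ^ μ * Real.exp (-(1/4) * x) < 1 := by
    have htend := tendsto_rpow_mul_exp_neg_mul_atTop_nhds_zero μ (1/4) (by norm_num)
    exact eventually_atTop.mp (htend.eventually_lt_const one_pos)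
  refine ⟨8 * π * ((2:ℝ) ^ μ + 1) * C₀, by positivity, max 2 M,
    le_trans one_le_two (le_max_left _ _), ?_⟩
  intro lam hlam f hf hfb z hz
  have hlam0 : (0:ℝ) < lam := lt_of_lt_of_le one_pos hlam
  set L : ℝ := lam ^ (-k / 2) with hLdef
  have hL0 : 0 < L := Real.rpow_pos_of_pos hlam0 _
  have hz2 : (2:ℝ) ≤ ‖z‖ := le_trans (le_max_left 2 M) hz
  have hz0 : (0:ℝ) < ‖z‖ := lt_of_lt_of_le two_pos hz2
  have hZ0 : (0:ℝ) < ‖z‖ ^ (-μ) := Real.rpow_pos_of_pos hz0 _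
  have hexp : Real.exp (-(‖z‖ / 2 / 2)) ≤ ‖z‖ ^ (-μ) := by
    have h1 := (hM ‖z‖ (le_trans (le_max_right 2 M) hz)).le
    have ha : (0:ℝ) < ‖z‖ ^ μ := Real.rpow_pos_of_pos hz0 μ
    rw [Real.rpow_neg hz0.le, inv_eq_one_div, le_div_iff₀ ha,
      show -(‖z‖ / 2 / 2) = -(1/4) * ‖z‖ by ring]
    nlinarith [Real.exp_pos (-(1/4) * ‖z‖)]
  set S : Set (EuclideanSpace ℝ (Fin 2)) := {w | ‖z - w‖ ≤ ‖z‖ / 2} with hSdef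
  have hSm : MeasurableSet S :=
    measurableSet_le (by fun_prop) measurable_const
  -- pointwise bounds for |f|
  have hfS : ∀ w ∈ S, |f w| ≤ C₀ * L * ((‖z‖ / 2) ^ (-μ)) := by
    intro w hw
    refine le_trans (hfb w) ?_
    have hw1 : ‖z‖ / 2 ≤ ‖w‖ := by
      have := norm_sub_norm_le z (z - w)
      simp only [sub_sub_cancel] at this
      have hw2 : ‖z - w‖ ≤ ‖z‖ / 2 := hw
      linarith
    have : (max 1 ‖w‖) ^ (-μ) ≤ (‖z‖ / 2) ^ (-μ) := by
      refine Real.rpow_le_rpow_of_nonpos (by linarith) ?_ (by linarith)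
      exact le_max_of_le_right hw1
    have hCL : (0:ℝ) ≤ C₀ * L := by positivity
    calc C₀ * lam ^ (-k / 2) * (max 1 ‖w‖) ^ (-μ) = C₀ * L * (max 1 ‖w‖) ^ (-μ) := rfl
      _ ≤ C₀ * L * ((‖z‖ / 2) ^ (-μ)) := mul_le_mul_of_nonneg_left this hCL
  have hfall : ∀ w : EuclideanSpace ℝ (Fin 2), |f w| ≤ C₀ * L := by
    intro w
    refine le_trans (hfb w) ?_
    have h1 : (max 1 ‖w‖) ^ (-μ) ≤ (1:ℝ) ^ (-μ) :=
      Real.rpow_le_rpow_of_nonpos one_pos (le_max_left _ _) (by linarith)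
    rw [Real.one_rpow] at h1
    have hCL : (0:ℝ) ≤ C₀ * L := by positivity
    calc C₀ * lam ^ (-k / 2) * (max 1 ‖w‖) ^ (-μ) ≤ C₀ * L * 1 :=
          mul_le_mul_of_nonneg_left h1 hCL
      _ = C₀ * L := mul_one _
  -- the main lintegral bound
  have hbound : ∫⁻ w, ENNReal.ofReal ‖f w * Bker lam (z - w)‖
      ≤ ENNReal.ofReal (8 * π * ((2:ℝ) ^ μ + 1) * C₀ * L * ‖z‖ ^ (-μ)) := by
    have hptS : ∀ w ∈ S, ENNReal.ofReal ‖f w * Bker lam (z - w)‖ ≤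
        ENNReal.ofReal (C₀ * L * ((‖z‖ / 2) ^ (-μ))) * ENNReal.ofReal (Bker lam (z - w)) := by
      intro w hw
      rw [← ENNReal.ofReal_mul (by positivity)]
      apply ENNReal.ofReal_le_ofReal
      rw [norm_mul, Real.norm_eq_abs, Real.norm_eq_abs,
        abs_of_nonneg (bker_nonneg lam (z - w))]
      exact mul_le_mul_of_nonneg_right (hfS w hw) (bker_nonneg lam (z - w))
    have hptSc : ∀ w, ENNReal.ofReal ‖f w * Bker lam (z - w)‖ ≤
        ENNReal.ofReal (C₀ * L) * ENNReal.ofReal (Bker lam (z - w)) := by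
      intro w
      rw [← ENNReal.ofReal_mul (by positivity)]
      apply ENNReal.ofReal_le_ofReal
      rw [norm_mul, Real.norm_eq_abs, Real.norm_eq_abs,
        abs_of_nonneg (bker_nonneg lam (z - w))]
      exact mul_le_mul_of_nonneg_right (hfall w) (bker_nonneg lam (z - w))
    have hS_int : ∫⁻ w in S, ENNReal.ofReal ‖f w * Bker lam (z - w)‖
        ≤ ENNReal.ofReal (C₀ * L * ((‖z‖ / 2) ^ (-μ)) * (8 * π)) := by
      calc ∫⁻ w in S, ENNReal.ofReal ‖f w * Bker lam (z - w)‖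
          ≤ ∫⁻ w in S, ENNReal.ofReal (C₀ * L * ((‖z‖ / 2) ^ (-μ))) *
              ENNReal.ofReal (Bker lam (z - w)) := by
            refine lintegral_mono_ae ?_
            filter_upwards [ae_restrict_mem hSm] with w hw
            exact hptS w hw
        _ = ENNReal.ofReal (C₀ * L * ((‖z‖ / 2) ^ (-μ))) *
              ∫⁻ w in S, ENNReal.ofReal (Bker lam (z - w)) :=
            lintegral_const_mul' _ _ ENNReal.ofReal_ne_top
        _ ≤ ENNReal.ofReal (C₀ * L * ((‖z‖ / 2) ^ (-μ))) *
              ENNReal.ofReal (8 * π * Real.exp (-(0 / 2))) :=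
            mul_le_mul_right (bker_bound hlam z le_rfl hSm
              (fun w _ => norm_nonneg _)) _
        _ = ENNReal.ofReal (C₀ * L * ((‖z‖ / 2) ^ (-μ)) * (8 * π)) := by
            rw [← ENNReal.ofReal_mul (by positivity)]
            norm_num
    have hSc_int : ∫⁻ w in Sᶜ, ENNReal.ofReal ‖f w * Bker lam (z - w)‖
        ≤ ENNReal.ofReal (C₀ * L * (8 * π * Real.exp (-(‖z‖ / 2 / 2)))) := by
      calc ∫⁻ w in Sᶜ, ENNReal.ofReal ‖f w * Bker lam (z - w)‖
          ≤ ∫⁻ w in Sᶜ, ENNReal.ofReal (C₀ * L) * ENNReal.ofReal (Bker lam (z - w)) :=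
            lintegral_mono fun w => hptSc w
        _ = ENNReal.ofReal (C₀ * L) * ∫⁻ w in Sᶜ, ENNReal.ofReal (Bker lam (z - w)) :=
            lintegral_const_mul' _ _ ENNReal.ofReal_ne_top
        _ ≤ ENNReal.ofReal (C₀ * L) *
              ENNReal.ofReal (8 * π * Real.exp (-(‖z‖ / 2 / 2))) := by
            refine mul_le_mul_right (bker_bound hlam z (by positivity) hSm.compl ?_) _
            intro w hw
            have hw' : ¬ ‖z - w‖ ≤ ‖z‖ / 2 := hw
            exact (not_le.mp hw').le
        _ = ENNReal.ofReal (C₀ * L * (8 * π * Real.exp (-(‖z‖ / 2 / 2)))) := by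
            rw [← ENNReal.ofReal_mul (by positivity)]
    calc ∫⁻ w, ENNReal.ofReal ‖f w * Bker lam (z - w)‖
        = (∫⁻ w in S, ENNReal.ofReal ‖f w * Bker lam (z - w)‖) +
          ∫⁻ w in Sᶜ, ENNReal.ofReal ‖f w * Bker lam (z - w)‖ :=
          (lintegral_add_compl _ hSm).symm
      _ ≤ ENNReal.ofReal (C₀ * L * ((‖z‖ / 2) ^ (-μ)) * (8 * π)) +
          ENNReal.ofReal (C₀ * L * (8 * π * Real.exp (-(‖z‖ / 2 / 2)))) :=
          add_le_add hS_int hSc_int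
      _ = ENNReal.ofReal (C₀ * L * ((‖z‖ / 2) ^ (-μ)) * (8 * π) +
          C₀ * L * (8 * π * Real.exp (-(‖z‖ / 2 / 2)))) := by
          rw [ENNReal.ofReal_add (by positivity) (by positivity)]
      _ ≤ ENNReal.ofReal (8 * π * ((2:ℝ) ^ μ + 1) * C₀ * L * ‖z‖ ^ (-μ)) := by
          apply ENNReal.ofReal_le_ofReal
          have hsplit : (‖z‖ / 2) ^ (-μ) = (2:ℝ) ^ μ * ‖z‖ ^ (-μ) := by
            rw [Real.div_rpow hz0.le (by norm_num : (0:ℝ) ≤ 2),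
              Real.rpow_neg (by norm_num : (0:ℝ) ≤ 2), div_eq_mul_inv, inv_inv]
            ring
          rw [hsplit]
          nlinarith [mul_le_mul_of_nonneg_left hexp
            (by positivity : (0:ℝ) ≤ C₀ * L * (8 * π))]
  -- conclude
  have h1 : |∫ w, f w * Bker lam (z - w)| = ‖∫ w, f w * Bker lam (z - w)‖ :=
    (Real.norm_eq_abs _).symm
  rw [h1]
  refine le_trans (norm_integral_le_lintegral_norm _) ?_
  have := ENNReal.toReal_mono (ENNReal.ofReal_ne_top) hbound
  rw [ENNReal.toReal_ofReal (by positivity)] at this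
  calc (∫⁻ w, ENNReal.ofReal ‖f w * Bker lam (z - w)‖).toReal
      ≤ 8 * π * ((2:ℝ) ^ μ + 1) * C₀ * L * ‖z‖ ^ (-μ) := this
    _ = 8 * π * ((2:ℝ) ^ μ + 1) * C₀ * lam ^ (-k / 2) * ‖z‖ ^ (-μ) := rfl

end Aux
end

section
/- Consider the first Fourier mode of Δu = f on ℝ² with |f₁(r)| ≤ C·r^{−1} and f₁ ≡ 0 for r ≤ 1. Then the solution u₁(s) = e^s ∫_{−∞}^s e^{−2σ} (∫_{−∞}^σ e^{3λ} f₁(e^λ) dλ) dσ (in the variable s = log r) vanishes for s ≤ 0 and satisfies |u₁(r)| ≤ C'·r·log r as r → ∞. -/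
open Filter MeasureTheory Set

/-- The first Fourier mode of `Δu = f` on `ℝ²` with `|f₁(r)| ≤ C r^{−1}`, `f₁ ≡ 0` for
`r ≤ 1`: in the variable `s = log r` the explicit solution
`u₁(s) = e^s ∫_{−∞}^s e^{−2σ} (∫_{−∞}^σ e^{3λ} f₁(e^λ) dλ) dσ` vanishes for `s ≤ 0` and
satisfies `|u₁| ≤ C' r log r`, i.e. `|u₁(s)| ≤ C' e^s s`. -/
theorem stmt15 (C : ℝ) (hC : 0 < C)
    (f₁ : ℝ → ℝ) (hcont : Continuous f₁) (hvan : ∀ r ≤ (1:ℝ), f₁ r = 0)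
    (hdec : ∀ r : ℝ, 1 ≤ r → |f₁ r| ≤ C / r) :
    (∀ s ≤ (0:ℝ),
      Real.exp s * (∫ σ in Set.Iic s,
        Real.exp (-2 * σ) * ∫ l in Set.Iic σ, Real.exp (3 * l) * f₁ (Real.exp l)) = 0) ∧
    (∃ C' > 0, ∀ s : ℝ, 1 ≤ s →
      |Real.exp s * ∫ σ in Set.Iic s,
        Real.exp (-2 * σ) * ∫ l in Set.Iic σ, Real.exp (3 * l) * f₁ (Real.exp l)| ≤
        C' * Real.exp s * s) := by
  set g : ℝ → ℝ := fun l => Real.exp (3 * l) * f₁ (Real.exp l) with hg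
  have hgcont : Continuous g := by continuity
  have hg0 : ∀ l ≤ (0:ℝ), g l = 0 := by
    intro l hl
    have : Real.exp l ≤ 1 := Real.exp_le_one_iff.mpr hl
    simp [hg, hvan _ this]
  have hgInt : ∀ a b : ℝ, IntervalIntegrable g volume a b :=
    fun a b => hgcont.intervalIntegrable a b
  set F : ℝ → ℝ := fun σ => ∫ l in (0:ℝ)..σ, g l with hF
  have hF0 : ∀ σ ≤ (0:ℝ), F σ = 0 := by
    intro σ hσ
    have : EqOn g (fun _ => (0:ℝ)) (Set.uIcc 0 σ) := by
      intro l hl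
      exact hg0 l (le_trans (hl.2) (by simp [hσ]))
    simp [hF, intervalIntegral.integral_congr this]
  have hIic : ∀ σ : ℝ, (∫ l in Set.Iic σ, g l) = F σ := by
    intro σ
    rcases le_or_gt σ 0 with hσ | hσ
    · rw [hF0 σ hσ]
      rw [MeasureTheory.setIntegral_congr_fun measurableSet_Iic
        (fun l hl => hg0 l (le_trans hl hσ))]
      simp
    · have hsplit : Set.Iic σ = Set.Iic 0 ∪ Set.Ioc 0 σ := (Set.Iic_union_Ioc_eq_Iic hσ.le).symm
      rw [hsplit, MeasureTheory.setIntegral_union (Set.Iic_disjoint_Ioc le_rfl)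
          measurableSet_Ioc
          ((MeasureTheory.integrableOn_congr_fun (fun l hl => hg0 l hl) measurableSet_Iic).mpr
            (integrableOn_zero))
          (hgcont.integrableOn_Ioc)]
      rw [MeasureTheory.setIntegral_congr_fun measurableSet_Iic (fun l hl => hg0 l hl)]
      simp [hF, intervalIntegral.integral_of_le hσ.le]
  have hFbound : ∀ σ : ℝ, 0 ≤ σ → |F σ| ≤ C / 2 * Real.exp (2 * σ) := by
    intro σ hσ
    have h1 : |F σ| ≤ ∫ l in (0:ℝ)..σ, C * Real.exp (2 * l) := by
      refine intervalIntegral.abs_integral_le_integral_abs hσ |>.trans ?_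
      apply intervalIntegral.integral_mono_on hσ (hgcont.abs.intervalIntegrable 0 σ)
        ((continuous_const.mul (Real.continuous_exp.comp (by continuity))).intervalIntegrable 0 σ)
      intro l hl
      have hel : 1 ≤ Real.exp l := Real.one_le_exp hl.1
      have := hdec (Real.exp l) hel
      calc |g l| = Real.exp (3 * l) * |f₁ (Real.exp l)| := by
            rw [hg, abs_mul, abs_of_pos (Real.exp_pos _)]
        _ ≤ Real.exp (3 * l) * (C / Real.exp l) := by
            exact mul_le_mul_of_nonneg_left this (Real.exp_pos _).le
        _ = C * Real.exp (2 * l) := by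
            rw [div_eq_mul_inv, ← Real.exp_neg, ← mul_assoc,
              mul_comm (Real.exp (3 * l)) C, mul_assoc, ← Real.exp_add,
              show 3 * l + -l = 2 * l by ring]
    have h2 : (∫ l in (0:ℝ)..σ, C * Real.exp (2 * l)) = C / 2 * (Real.exp (2 * σ) - 1) := by
      rw [intervalIntegral.integral_const_mul]
      rw [show (fun l : ℝ => Real.exp (2 * l)) = fun l : ℝ => Real.exp (2 * l) from rfl]
      rw [intervalIntegral.integral_comp_mul_left (fun x => Real.exp x) (by norm_num : (2:ℝ) ≠ 0)]
      simp [integral_exp]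
      ring
    have h3 : C / 2 * (Real.exp (2 * σ) - 1) ≤ C / 2 * Real.exp (2 * σ) := by
      apply mul_le_mul_of_nonneg_left (by linarith) (by linarith)
    linarith [h1, h2 ▸ h1]
  have hhIic : ∀ s : ℝ, (∫ σ in Set.Iic s,
      Real.exp (-2 * σ) * ∫ l in Set.Iic σ, g l)
      = ∫ σ in Set.Iic s, Real.exp (-2 * σ) * F σ := by
    intro s
    apply MeasureTheory.integral_congr_ae
    filter_upwards with σ
    rw [hIic σ]
  have hfirst : ∀ s ≤ (0:ℝ), Real.exp s * (∫ σ in Set.Iic s,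
      Real.exp (-2 * σ) * ∫ l in Set.Iic σ, g l) = 0 := by
    intro s hs
    rw [hhIic s,
      MeasureTheory.setIntegral_congr_fun measurableSet_Iic
        (fun σ (hσ : σ ≤ s) => by rw [hF0 σ (hσ.trans hs), mul_zero])]
    simp
  refine ⟨hfirst, ⟨C / 2, by linarith, ?_⟩⟩
  intro s hs
  rw [hhIic s]
  have hsplit : Set.Iic s = Set.Iic 0 ∪ Set.Ioc 0 s :=
    (Set.Iic_union_Ioc_eq_Iic (by linarith)).symm
  have hcontH : Continuous (fun σ => Real.exp (-2 * σ) * F σ) := by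
    exact (Real.continuous_exp.comp (by continuity)).mul
      (intervalIntegral.continuous_primitive hgInt 0)
  have hIic0 : (∫ σ in Set.Iic (0:ℝ), Real.exp (-2 * σ) * F σ) = 0 := by
    rw [MeasureTheory.setIntegral_congr_fun measurableSet_Iic
      (fun σ (hσ : σ ≤ (0:ℝ)) => by rw [hF0 σ hσ, mul_zero])]
    simp
  rw [hsplit, MeasureTheory.setIntegral_union (Set.Iic_disjoint_Ioc le_rfl) measurableSet_Ioc
      ((MeasureTheory.integrableOn_congr_fun
        (fun σ (hσ : σ ≤ (0:ℝ)) => by rw [hF0 σ hσ, mul_zero]) measurableSet_Iic).mpr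
        integrableOn_zero)
      (hcontH.integrableOn_Ioc), hIic0, zero_add]
  have hbound : |∫ σ in Set.Ioc (0:ℝ) s, Real.exp (-2 * σ) * F σ| ≤ C / 2 * s := by
    have := MeasureTheory.norm_setIntegral_le_of_norm_le_const
      (μ := volume) (s := Set.Ioc (0:ℝ) s) (f := fun σ => Real.exp (-2 * σ) * F σ) (C := C / 2)
      (by rw [Real.volume_Ioc]; exact ENNReal.ofReal_lt_top)
      (fun σ hσ => by
        rw [Real.norm_eq_abs, abs_mul, abs_of_pos (Real.exp_pos _)]
        calc Real.exp (-2 * σ) * |F σ|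
            ≤ Real.exp (-2 * σ) * (C / 2 * Real.exp (2 * σ)) :=
              mul_le_mul_of_nonneg_left (hFbound σ hσ.1.le) (Real.exp_pos _).le
          _ = C / 2 := by
              rw [mul_comm (C / 2), ← mul_assoc, ← Real.exp_add,
                show -2 * σ + 2 * σ = 0 by ring, Real.exp_zero, one_mul])
    rw [Real.volume_real_Ioc_of_le (by linarith)] at this
    simpa [Real.norm_eq_abs] using this
  rw [abs_mul, abs_of_pos (Real.exp_pos s)]
  calc Real.exp s * |∫ σ in Set.Ioc (0:ℝ) s, Real.exp (-2 * σ) * F σ|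
      ≤ Real.exp s * (C / 2 * s) :=
        mul_le_mul_of_nonneg_left hbound (Real.exp_pos s).le
    _ = C / 2 * Real.exp s * s := by ring
end
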